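/- Threshold for connectivity in the Erdős–Rényi graph: suppose p_n = (log n + c_n)/n with 0 < p_n < 1. (i) If lim_{n→∞} c_n = +∞, then lim_{n→∞} P_n(G(n, p_n) is connected) = 1. (ii) If lim_{n→∞} c_n = −∞, then lim_{n→∞} P_n(G(n, p_n) is connected) = 0. -/

import Mathlib

open MeasureTheory Filter

/-- The index set of potential edges: unordered pairs of distinct vertices of `{1,...,n}`. -/
abbrev EdgeIdx (n : ℕ) := {e : Sym2 (Fin n) // ¬ e.IsDiag}

/-- The Bernoulli(`p`) measure on `Bool`: mass `p` at `true` and `1-p` at `false`. -/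
noncomputable def bernoulliBool (p : ℝ) : Measure Bool :=
  ENNReal.ofReal p • Measure.dirac true + ENNReal.ofReal (1 - p) • Measure.dirac false

/-- The Erdős–Rényi measure `G(n,p)`: the product, over all unordered pairs of distinct
vertices, of Bernoulli(`p`) measures on `{0,1}` (here `Bool`). -/
noncomputable def erMeasure (n : ℕ) (p : ℝ) : Measure (EdgeIdx n → Bool) :=
  Measure.pi fun _ => bernoulliBool p

/-- The simple graph on `{1,...,n}` determined by the edge-indicator configuration `ω`:
a pair `{i,j}` of distinct vertices is an edge exactly when its coordinate is `true`. -/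
def erGraph (n : ℕ) (ω : EdgeIdx n → Bool) : SimpleGraph (Fin n) where
  Adj i j := ∃ h : ¬ (s(i, j) : Sym2 (Fin n)).IsDiag, ω ⟨s(i, j), h⟩ = true
  symm := by
    constructor
    intro i j hadj
    obtain ⟨h, hw⟩ := hadj
    have hswap : (s(i, j) : Sym2 (Fin n)) = s(j, i) := Sym2.eq_swap
    refine ⟨hswap ▸ h, ?_⟩
    have he : (⟨s(j, i), hswap ▸ h⟩ : EdgeIdx n) = ⟨s(i, j), h⟩ := Subtype.ext hswap.symm
    rw [he]
    exact hw
  loopless := by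
    constructor
    intro i hadj
    obtain ⟨h, _⟩ := hadj
    exact h (Sym2.mk_isDiag_iff.mpr rfl)


/-! ### Auxiliary lemmas -/

lemma bernoulliBool_apply (p : ℝ) (s : Set Bool) :
    bernoulliBool p s = ENNReal.ofReal p * s.indicator 1 true
      + ENNReal.ofReal (1 - p) * s.indicator 1 false := by
  simp [bernoulliBool, Measure.dirac_apply' _ s.toFinite.measurableSet]

lemma bernoulliBool_false (p : ℝ) : bernoulliBool p {false} = ENNReal.ofReal (1 - p) := by
  simp [bernoulliBool_apply]

lemma bernoulliBool_univ (p : ℝ) (h0 : 0 ≤ p) (h1 : p ≤ 1) :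
    bernoulliBool p Set.univ = 1 := by
  rw [bernoulliBool_apply]
  simp only [Set.indicator_univ, Pi.one_apply, mul_one]
  rw [← ENNReal.ofReal_add h0 (by linarith), add_sub_cancel, ENNReal.ofReal_one]

lemma bernoulliBool_isProb (p : ℝ) (h0 : 0 ≤ p) (h1 : p ≤ 1) :
    IsProbabilityMeasure (bernoulliBool p) :=
  ⟨bernoulliBool_univ p h0 h1⟩

lemma erMeasure_isProb (n : ℕ) (p : ℝ) (h0 : 0 ≤ p) (h1 : p ≤ 1) :
    IsProbabilityMeasure (erMeasure n p) := by
  haveI := bernoulliBool_isProb p h0 h1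
  exact MeasureTheory.Measure.pi.instIsProbabilityMeasure _

/-- The measure of the cylinder event "all coordinates in `E` are false". -/
lemma erMeasure_allFalse (n : ℕ) (p : ℝ) (h0 : 0 ≤ p) (h1 : p ≤ 1) (E : Finset (EdgeIdx n)) :
    erMeasure n p {ω | ∀ e ∈ E, ω e = false} = ENNReal.ofReal (1 - p) ^ E.card := by
  haveI := bernoulliBool_isProb p h0 h1
  have hset : {ω : EdgeIdx n → Bool | ∀ e ∈ E, ω e = false}
      = Set.univ.pi (fun e => if e ∈ E then ({false} : Set Bool) else Set.univ) := by
    ext ω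
    simp only [Set.mem_setOf_eq, Set.mem_pi, Set.mem_univ, forall_true_left]
    constructor
    · intro h e
      by_cases he : e ∈ E <;> simp [he, h e]
    · intro h e he
      have := h e
      simpa [he] using this
  rw [hset, erMeasure, Measure.pi_pi]
  have : ∀ e : EdgeIdx n,
      bernoulliBool p (if e ∈ E then ({false} : Set Bool) else Set.univ)
        = if e ∈ E then ENNReal.ofReal (1 - p) else 1 := by
    intro e
    by_cases he : e ∈ E
    · rw [if_pos he, if_pos he, bernoulliBool_false]
    · rw [if_neg he, if_neg he, bernoulliBool_univ p h0 h1]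
  rw [Finset.prod_congr rfl (fun e _ => this e), Finset.prod_ite_mem,
    Finset.univ_inter, Finset.prod_const]

section Discrete
variable {Ω : Type*} [Fintype Ω] [MeasurableSpace Ω] [MeasurableSingletonClass Ω]

lemma measure_toReal_eq_sum_indicator (μ : Measure Ω) [IsFiniteMeasure μ] (s : Set Ω) :
    (μ s).toReal = ∑ ω : Ω, Set.indicator s (fun ω => (μ {ω}).toReal) ω := by
  classical
  have hs : s = ⋃ ω ∈ s.toFinset, ({ω} : Set Ω) := by simp
  have hdisj : (↑s.toFinset : Set Ω).PairwiseDisjoint (fun ω => ({ω} : Set Ω)) := by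
    intro a _ b _ hab
    simp [Set.disjoint_singleton, hab]
  have := measure_biUnion_finset (μ := μ) hdisj (fun b _ => measurableSet_singleton b)
  rw [← hs] at this
  rw [this, ENNReal.toReal_sum (fun a _ => measure_ne_top μ _)]
  rw [Finset.sum_indicator_eq_sum_filter]
  apply Finset.sum_congr _ (fun _ _ => rfl)
  ext ω
  simp

lemma chung_erdos {ι : Type*} (μ : Measure Ω) [IsFiniteMeasure μ] (t : Finset ι) (A : ι → Set Ω) :
    (∑ i ∈ t, (μ (A i)).toReal) ^ 2
      ≤ (μ (⋃ i ∈ t, A i)).toReal * ∑ i ∈ t, ∑ j ∈ t, (μ (A i ∩ A j)).toReal := by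
  classical
  set w : Ω → ℝ := fun ω => (μ {ω}).toReal with hw
  have hw0 : ∀ ω, 0 ≤ w ω := fun ω => ENNReal.toReal_nonneg
  set F : Ω → ℝ := fun ω => ∑ i ∈ t, Set.indicator (A i) (fun _ => (1:ℝ)) ω with hF
  set U := ⋃ i ∈ t, A i with hU
  have hFU : ∀ ω, ω ∉ U → F ω = 0 := by
    intro ω hω
    apply Finset.sum_eq_zero
    intro i hi
    have : ω ∉ A i := fun h => hω (Set.mem_biUnion hi h)
    simp [this]
  have h1 : ∑ i ∈ t, (μ (A i)).toReal = ∑ ω : Ω, w ω * F ω := by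
    rw [Finset.sum_congr rfl (fun i _ => measure_toReal_eq_sum_indicator μ (A i)),
      Finset.sum_comm]
    apply Finset.sum_congr rfl
    intro ω _
    rw [hF, Finset.mul_sum]
    apply Finset.sum_congr rfl
    intro i _
    by_cases hω : ω ∈ A i <;> simp [hω, hw]
  have h2 : ∑ i ∈ t, ∑ j ∈ t, (μ (A i ∩ A j)).toReal = ∑ ω : Ω, w ω * F ω ^ 2 := by
    have : ∀ ω : Ω, w ω * F ω ^ 2
        = ∑ i ∈ t, ∑ j ∈ t, Set.indicator (A i ∩ A j) w ω := by
      intro ω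
      rw [sq, hF, Finset.sum_mul_sum]
      rw [Finset.mul_sum]
      apply Finset.sum_congr rfl
      intro i _
      rw [Finset.mul_sum]
      apply Finset.sum_congr rfl
      intro j _
      by_cases hi : ω ∈ A i <;> by_cases hj : ω ∈ A j <;>
        simp [hi, hj, Set.indicator_apply, hw]
    calc ∑ i ∈ t, ∑ j ∈ t, (μ (A i ∩ A j)).toReal
        = ∑ i ∈ t, ∑ j ∈ t, ∑ ω : Ω, Set.indicator (A i ∩ A j) w ω :=
          Finset.sum_congr rfl fun i _ => Finset.sum_congr rfl fun j _ =>
            measure_toReal_eq_sum_indicator μ _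
      _ = ∑ i ∈ t, ∑ ω : Ω, ∑ j ∈ t, Set.indicator (A i ∩ A j) w ω :=
          Finset.sum_congr rfl fun i _ => Finset.sum_comm
      _ = ∑ ω : Ω, ∑ i ∈ t, ∑ j ∈ t, Set.indicator (A i ∩ A j) w ω := Finset.sum_comm
      _ = ∑ ω : Ω, w ω * F ω ^ 2 := Finset.sum_congr rfl fun ω _ => (this ω).symm
  have h3 : (μ U).toReal = ∑ ω : Ω, Set.indicator U (fun _ => (1:ℝ)) ω ^ 2 * w ω := by
    rw [measure_toReal_eq_sum_indicator μ U]
    apply Finset.sum_congr rfl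
    intro ω _
    by_cases hω : ω ∈ U <;> simp [hω, hw]
  have key := Finset.sum_mul_sq_le_sq_mul_sq Finset.univ
    (fun ω => Set.indicator U (fun _ => (1:ℝ)) ω * Real.sqrt (w ω))
    (fun ω => Real.sqrt (w ω) * F ω)
  have hfg : ∀ ω : Ω, (Set.indicator U (fun _ => (1:ℝ)) ω * Real.sqrt (w ω))
      * (Real.sqrt (w ω) * F ω) = w ω * F ω := by
    intro ω
    by_cases hω : ω ∈ U
    · simp only [Set.indicator_of_mem hω]
      rw [one_mul, ← mul_assoc, Real.mul_self_sqrt (hw0 ω)]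
    · simp [hFU ω hω]
  have hf2 : ∀ ω : Ω, (Set.indicator U (fun _ => (1:ℝ)) ω * Real.sqrt (w ω)) ^ 2
      = Set.indicator U (fun _ => (1:ℝ)) ω ^ 2 * w ω := by
    intro ω
    rw [mul_pow, Real.sq_sqrt (hw0 ω)]
  have hg2 : ∀ ω : Ω, (Real.sqrt (w ω) * F ω) ^ 2 = w ω * F ω ^ 2 := by
    intro ω
    rw [mul_pow, Real.sq_sqrt (hw0 ω)]
  rw [h1, h2, h3]
  calc (∑ ω : Ω, w ω * F ω) ^ 2
      = (∑ ω : Ω, (Set.indicator U (fun _ => (1:ℝ)) ω * Real.sqrt (w ω))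
          * (Real.sqrt (w ω) * F ω)) ^ 2 := by
        rw [Finset.sum_congr rfl (fun ω _ => (hfg ω))]
    _ ≤ (∑ ω : Ω, (Set.indicator U (fun _ => (1:ℝ)) ω * Real.sqrt (w ω)) ^ 2)
          * ∑ ω : Ω, (Real.sqrt (w ω) * F ω) ^ 2 := key
    _ = (∑ ω : Ω, Set.indicator U (fun _ => (1:ℝ)) ω ^ 2 * w ω)
          * ∑ ω : Ω, w ω * F ω ^ 2 := by
        rw [Finset.sum_congr rfl (fun ω _ => hf2 ω), Finset.sum_congr rfl (fun ω _ => hg2 ω)]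

end Discrete

/-- Edges crossing between `S` and its complement. -/
def crossEdges (n : ℕ) (S : Finset (Fin n)) : Finset (EdgeIdx n) :=
  Finset.univ.filter (fun e => ∃ i ∈ S, ∃ j ∈ Sᶜ, e.1 = s(i, j))

/-- Edges incident to the vertex `i`. -/
def incEdges (n : ℕ) (i : Fin n) : Finset (EdgeIdx n) :=
  Finset.univ.filter (fun e => i ∈ e.1)

lemma card_crossEdges_ge (n : ℕ) (S : Finset (Fin n)) :
    S.card * Sᶜ.card ≤ (crossEdges n S).card := by
  classical
  have h1 : (S ×ˢ Sᶜ).card ≤ ((crossEdges n S).image Subtype.val).card := by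
    apply Finset.card_le_card_of_injOn (fun x => s(x.1, x.2))
    · rintro ⟨i, j⟩ hij
      rw [Finset.mem_coe, Finset.mem_product] at hij
      have hne : i ≠ j := by
        rintro rfl
        exact (Finset.mem_compl.mp hij.2) hij.1
      have hd : ¬ (s(i, j) : Sym2 (Fin n)).IsDiag := by
        rw [Sym2.mk_isDiag_iff]; exact hne
      refine Finset.mem_image.mpr ⟨⟨s(i, j), hd⟩, ?_, rfl⟩
      exact Finset.mem_filter.mpr ⟨Finset.mem_univ _, ⟨i, hij.1, j, hij.2, rfl⟩⟩
    · rintro ⟨i, j⟩ hij ⟨i', j'⟩ hij' h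
      simp only [Finset.coe_product, Set.mem_prod, Finset.mem_coe] at hij hij'
      rcases Sym2.eq_iff.mp h with ⟨h1, h2⟩ | ⟨h1, h2⟩
      · exact Prod.ext h1 h2
      · exact absurd ((show i = j' from h1) ▸ hij.1) (Finset.mem_compl.mp hij'.2)
  rwa [Finset.card_product, Finset.card_image_of_injective _ Subtype.val_injective] at h1

lemma card_incEdges_ge (n : ℕ) (i : Fin n) : n - 1 ≤ (incEdges n i).card := by
  classical
  have h1 : ((Finset.univ : Finset (Fin n)).erase i).card
      ≤ ((incEdges n i).image Subtype.val).card := by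
    apply Finset.card_le_card_of_injOn (fun j => s(i, j))
    · intro j hj
      have hne : i ≠ j := (Finset.ne_of_mem_erase hj).symm
      have hd : ¬ (s(i, j) : Sym2 (Fin n)).IsDiag := by
        rw [Sym2.mk_isDiag_iff]; exact hne
      refine Finset.mem_image.mpr ⟨⟨s(i, j), hd⟩, ?_, rfl⟩
      exact Finset.mem_filter.mpr ⟨Finset.mem_univ _, Sym2.mem_mk_left i j⟩
    · intro j hj j' hj' h
      rcases Sym2.eq_iff.mp h with ⟨-, h2⟩ | ⟨h1, h2⟩
      · exact h2
      · exact h2.trans h1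
  rwa [Finset.card_erase_of_mem (Finset.mem_univ i), Finset.card_univ, Fintype.card_fin,
    Finset.card_image_of_injective _ Subtype.val_injective] at h1

lemma card_incEdges_le (n : ℕ) (i : Fin n) : (incEdges n i).card ≤ n - 1 := by
  classical
  have h1 : (incEdges n i).card ≤ ((Finset.univ : Finset (Fin n)).erase i).card := by
    apply Finset.card_le_card_of_injOn
      (fun e => if h : i ∈ e.1 then Sym2.Mem.other' h else i)
    · intro e he
      have hi : i ∈ e.1 := (Finset.mem_filter.mp he).2
      dsimp only
      rw [dif_pos hi]
      refine Finset.mem_erase.mpr ⟨?_, Finset.mem_univ _⟩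
      intro hcon
      apply e.2
      rw [← Sym2.other_spec' hi, hcon, Sym2.mk_isDiag_iff]
    · intro e he e' he' h
      have hi : i ∈ e.1 := (Finset.mem_filter.mp (Finset.mem_coe.mp he)).2
      have hi' : i ∈ e'.1 := (Finset.mem_filter.mp (Finset.mem_coe.mp he')).2
      simp only [dif_pos hi, dif_pos hi'] at h
      apply Subtype.ext
      rw [← Sym2.other_spec' hi, ← Sym2.other_spec' hi', h]
  rwa [Finset.card_erase_of_mem (Finset.mem_univ i), Finset.card_univ, Fintype.card_fin] at h1

lemma card_incEdges (n : ℕ) (i : Fin n) : (incEdges n i).card = n - 1 :=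
  le_antisymm (card_incEdges_le n i) (card_incEdges_ge n i)

lemma card_inc_inter_le (n : ℕ) {i j : Fin n} (hij : i ≠ j) :
    (incEdges n i ∩ incEdges n j).card ≤ 1 := by
  classical
  apply Finset.card_le_one.mpr
  intro a ha b hb
  rw [Finset.mem_inter] at ha hb
  have ha1 : i ∈ a.1 := (Finset.mem_filter.mp ha.1).2
  have ha2 : j ∈ a.1 := (Finset.mem_filter.mp ha.2).2
  have hb1 : i ∈ b.1 := (Finset.mem_filter.mp hb.1).2
  have hb2 : j ∈ b.1 := (Finset.mem_filter.mp hb.2).2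
  exact Subtype.ext (Sym2.eq_of_ne_mem hij ha1 ha2 hb1 hb2)

lemma card_inc_union_ge (n : ℕ) {i j : Fin n} (hij : i ≠ j) :
    2 * (n - 1) - 1 ≤ (incEdges n i ∪ incEdges n j).card := by
  classical
  have h := Finset.card_union_add_card_inter (incEdges n i) (incEdges n j)
  have h1 := card_inc_inter_le n hij
  have h2 := card_incEdges n i
  have h3 := card_incEdges n j
  omega

lemma not_connected_of_isolated {n : ℕ} (hn : 2 ≤ n) (ω : EdgeIdx n → Bool) (i : Fin n)
    (hiso : ∀ e ∈ incEdges n i, ω e = false) : ¬ (erGraph n ω).Connected := by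
  intro hc
  obtain ⟨j, hj⟩ : ∃ j : Fin n, j ≠ i := by
    have : 1 < Fintype.card (Fin n) := by rw [Fintype.card_fin]; omega
    exact Fintype.exists_ne_of_one_lt_card this i
  obtain ⟨w⟩ := hc.preconnected i j
  cases w with
  | nil => exact hj rfl
  | cons h' p =>
    obtain ⟨hd, htrue⟩ := h'
    have hmem : (⟨s(i, _), hd⟩ : EdgeIdx n) ∈ incEdges n i :=
      Finset.mem_filter.mpr ⟨Finset.mem_univ _, Sym2.mem_mk_left _ _⟩
    rw [hiso _ hmem] at htrue
    exact Bool.false_ne_true htrue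

lemma exists_cut_of_not_connected {n : ℕ} (hn : 1 ≤ n) (ω : EdgeIdx n → Bool)
    (h : ¬ (erGraph n ω).Connected) :
    ∃ S : Finset (Fin n), S.Nonempty ∧ S ≠ Finset.univ ∧
      ∀ e ∈ crossEdges n S, ω e = false := by
  classical
  haveI : Nonempty (Fin n) := Fin.pos_iff_nonempty.mp hn
  rw [SimpleGraph.connected_iff] at h
  push_neg at h
  have hpre : ¬ (erGraph n ω).Preconnected := fun hp => (h hp).false ⟨0, by omega⟩
  rw [SimpleGraph.Preconnected] at hpre
  push_neg at hpre
  obtain ⟨u, v, huv⟩ := hpre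
  refine ⟨Finset.univ.filter (fun x => (erGraph n ω).Reachable u x), ⟨u, ?_⟩, ?_, ?_⟩
  · exact Finset.mem_filter.mpr ⟨Finset.mem_univ _, SimpleGraph.Reachable.refl u⟩
  · intro hcon
    have : v ∈ Finset.univ.filter (fun x => (erGraph n ω).Reachable u x) := by
      rw [hcon]; exact Finset.mem_univ v
    exact huv (Finset.mem_filter.mp this).2
  · intro e he
    obtain ⟨-, i, hi, j, hj, hij⟩ := Finset.mem_filter.mp he
    by_contra hne
    have htrue : ω e = true := by
      cases hh : ω e
      · exact absurd hh hne
      · rfl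
    have hd : ¬ (s(i, j) : Sym2 (Fin n)).IsDiag := hij ▸ e.2
    have hadj : (erGraph n ω).Adj i j := by
      refine ⟨hd, ?_⟩
      have : (⟨s(i, j), hd⟩ : EdgeIdx n) = e := Subtype.ext hij.symm
      rw [this]; exact htrue
    have hrj : (erGraph n ω).Reachable u j :=
      ((Finset.mem_filter.mp hi).2).trans hadj.reachable
    exact Finset.mem_compl.mp hj (Finset.mem_filter.mpr ⟨Finset.mem_univ _, hrj⟩)


/-- The collection of nonempty proper subsets of the vertex set. -/
def cutSet (n : ℕ) : Finset (Finset (Fin n)) :=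
  Finset.univ.filter (fun S => S.Nonempty ∧ S ≠ Finset.univ)

lemma measure_disc_le (n : ℕ) {p : ℝ} (h0 : 0 ≤ p) (h1 : p ≤ 1) (hn : 1 ≤ n) :
    (erMeasure n p {ω | ¬ (erGraph n ω).Connected}).toReal
      ≤ ∑ k ∈ Finset.Icc 1 (n-1), (n.choose k : ℝ) * (1-p)^(k*(n-k)) := by
  classical
  haveI := erMeasure_isProb n p h0 h1
  have hq0 : (0:ℝ) ≤ 1 - p := by linarith
  have hsub : {ω : EdgeIdx n → Bool | ¬ (erGraph n ω).Connected}
      ⊆ ⋃ S ∈ cutSet n, {ω | ∀ e ∈ crossEdges n S, ω e = false} := by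
    intro ω hω
    obtain ⟨S, hS1, hS2, hS3⟩ := exists_cut_of_not_connected hn ω hω
    exact Set.mem_biUnion (Finset.mem_filter.mpr ⟨Finset.mem_univ _, hS1, hS2⟩) hS3
  have h2 : erMeasure n p {ω | ¬ (erGraph n ω).Connected}
      ≤ ∑ S ∈ cutSet n, ENNReal.ofReal (1-p) ^ (S.card * (n - S.card)) := by
    refine (measure_mono hsub).trans ?_
    refine (measure_biUnion_finset_le _ _).trans ?_
    apply Finset.sum_le_sum
    intro S _
    rw [erMeasure_allFalse n p h0 h1]
    apply pow_le_pow_of_le_one (by positivity) (ENNReal.ofReal_le_one.mpr (by linarith))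
    have := card_crossEdges_ge n S
    rwa [Finset.card_compl, Fintype.card_fin] at this
  have hfin : (∑ S ∈ cutSet n, ENNReal.ofReal (1-p) ^ (S.card * (n - S.card))) ≠ ⊤ :=
    ENNReal.sum_ne_top.mpr (fun S _ => ENNReal.pow_ne_top ENNReal.ofReal_ne_top)
  have h3 : (erMeasure n p {ω | ¬ (erGraph n ω).Connected}).toReal
      ≤ ∑ S ∈ cutSet n, (1-p) ^ (S.card * (n - S.card)) := by
    refine (ENNReal.toReal_mono hfin h2).trans_eq ?_
    rw [ENNReal.toReal_sum (fun S _ => ENNReal.pow_ne_top ENNReal.ofReal_ne_top)]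
    exact Finset.sum_congr rfl fun S _ => by
      rw [← ENNReal.ofReal_pow hq0, ENNReal.toReal_ofReal (pow_nonneg hq0 _)]
  refine h3.trans ?_
  have hmaps : ∀ S ∈ cutSet n, S.card ∈ Finset.Icc 1 (n-1) := by
    intro S hS
    obtain ⟨-, hS1, hS2⟩ := Finset.mem_filter.mp hS
    have hpos : 0 < S.card := Finset.card_pos.mpr hS1
    have hlt : S.card < n := by
      have := (Finset.card_lt_iff_ne_univ S).mpr hS2
      rwa [Fintype.card_fin] at this
    exact Finset.mem_Icc.mpr ⟨hpos, by omega⟩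
  rw [← Finset.sum_fiberwise_of_maps_to hmaps (fun S => (1-p) ^ (S.card * (n - S.card)))]
  apply Finset.sum_le_sum
  intro k hk
  have hsum : ∑ S ∈ (cutSet n).filter (fun S => S.card = k), (1-p) ^ (S.card * (n - S.card))
      = ((cutSet n).filter (fun S => S.card = k)).card * (1-p) ^ (k * (n - k)) := by
    rw [Finset.sum_congr rfl (fun S hS => by
      rw [(Finset.mem_filter.mp hS).2]), Finset.sum_const, nsmul_eq_mul]
  rw [hsum]
  apply mul_le_mul_of_nonneg_right _ (pow_nonneg hq0 _)
  have hsubset : (cutSet n).filter (fun S => S.card = k)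
      ⊆ Finset.powersetCard k Finset.univ := by
    intro S hS
    exact Finset.mem_powersetCard_univ.mpr (Finset.mem_filter.mp hS).2
  have := Finset.card_le_card hsubset
  rw [Finset.card_powersetCard, Finset.card_univ, Fintype.card_fin] at this
  exact_mod_cast this

lemma conn_toReal_eq (n : ℕ) {p : ℝ} (h0 : 0 ≤ p) (h1 : p ≤ 1) :
    (erMeasure n p {ω | (erGraph n ω).Connected}).toReal
      = 1 - (erMeasure n p {ω | ¬ (erGraph n ω).Connected}).toReal := by
  haveI := erMeasure_isProb n p h0 h1
  have hc : {ω : EdgeIdx n → Bool | ¬ (erGraph n ω).Connected}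
      = {ω | (erGraph n ω).Connected}ᶜ := rfl
  have hmeas : MeasurableSet {ω : EdgeIdx n → Bool | (erGraph n ω).Connected} :=
    (Set.toFinite _).measurableSet
  have hadd := measure_add_measure_compl (μ := erMeasure n p) hmeas
  rw [← hc] at hadd
  have := congrArg ENNReal.toReal hadd
  rw [ENNReal.toReal_add (measure_ne_top _ _) (measure_ne_top _ _)] at this
  simp only [measure_univ, ENNReal.toReal_one] at this
  linarith

lemma measure_conn_le (n : ℕ) {p : ℝ} (h0 : 0 ≤ p) (h1 : p < 1) (hn : 2 ≤ n) :
    (erMeasure n p {ω | (erGraph n ω).Connected}).toReal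
      ≤ 1 - (((n:ℝ) * (1-p)^(n-1))⁻¹ + ((1:ℝ)-p)⁻¹)⁻¹ := by
  classical
  haveI := erMeasure_isProb n p h0 h1.le
  set q : ℝ := 1 - p with hqdef
  have hq0 : 0 < q := by simp only [hqdef]; linarith
  have hq1 : q ≤ 1 := by simp only [hqdef]; linarith
  set a : ℝ := (n:ℝ) * q^(n-1) with hadef
  have hn0 : (0:ℝ) < n := by positivity
  have ha0 : 0 < a := by positivity
  set A : Fin n → Set (EdgeIdx n → Bool) :=
    fun i => {ω | ∀ e ∈ incEdges n i, ω e = false} with hAdef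
  have hA : ∀ i, (erMeasure n p (A i)).toReal = q^(n-1) := by
    intro i
    rw [hAdef]
    rw [erMeasure_allFalse n p h0 h1.le, card_incEdges, ← ENNReal.ofReal_pow hq0.le,
      ENNReal.toReal_ofReal (pow_nonneg hq0.le _)]
  set U : Set (EdgeIdx n → Bool) := ⋃ i ∈ Finset.univ, A i with hUdef
  set P : ℝ := (erMeasure n p U).toReal with hPdef
  have hP0 : 0 ≤ P := ENNReal.toReal_nonneg
  -- second moment bound
  have hce := chung_erdos (erMeasure n p) Finset.univ A
  have hS : ∑ i ∈ Finset.univ, (erMeasure n p (A i)).toReal = a := by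
    rw [Finset.sum_congr rfl (fun i _ => hA i), Finset.sum_const, Finset.card_univ,
      Fintype.card_fin, nsmul_eq_mul, hadef]
  have hpair : ∀ i j : Fin n, i ≠ j →
      (erMeasure n p (A i ∩ A j)).toReal ≤ q^(2*(n-1)-1) := by
    intro i j hij
    have hinter : A i ∩ A j
        = {ω : EdgeIdx n → Bool | ∀ e ∈ incEdges n i ∪ incEdges n j, ω e = false} := by
      ext ω
      simp only [hAdef, Set.mem_inter_iff, Set.mem_setOf_eq, Finset.mem_union]
      constructor
      · rintro ⟨hi, hj⟩ e (he | he)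
        · exact hi e he
        · exact hj e he
      · intro h
        exact ⟨fun e he => h e (Or.inl he), fun e he => h e (Or.inr he)⟩
    rw [hinter, erMeasure_allFalse n p h0 h1.le]
    have hle : ENNReal.ofReal q ^ (incEdges n i ∪ incEdges n j).card
        ≤ ENNReal.ofReal q ^ (2*(n-1)-1) :=
      pow_le_pow_of_le_one (by positivity) (ENNReal.ofReal_le_one.mpr hq1)
        (card_inc_union_ge n hij)
    refine (ENNReal.toReal_mono (ENNReal.pow_ne_top ENNReal.ofReal_ne_top) hle).trans_eq ?_
    rw [← ENNReal.ofReal_pow hq0.le, ENNReal.toReal_ofReal (pow_nonneg hq0.le _)]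
  have hD : ∑ i : Fin n, ∑ j : Fin n, (erMeasure n p (A i ∩ A j)).toReal
      ≤ a + (n:ℝ)^2 * q^(2*(n-1)-1) := by
    have hrow : ∀ i : Fin n, ∑ j : Fin n, (erMeasure n p (A i ∩ A j)).toReal
        ≤ q^(n-1) + (n:ℝ) * q^(2*(n-1)-1) := by
      intro i
      rw [← Finset.add_sum_erase _ _ (Finset.mem_univ i)]
      have h1' : (erMeasure n p (A i ∩ A i)).toReal = q^(n-1) := by
        rw [Set.inter_self]; exact hA i
      have h2' : ∑ j ∈ Finset.univ.erase i, (erMeasure n p (A i ∩ A j)).toReal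
          ≤ (n:ℝ) * q^(2*(n-1)-1) := by
        refine (Finset.sum_le_sum (fun j hj =>
          hpair i j (Ne.symm (Finset.ne_of_mem_erase hj)))).trans ?_
        rw [Finset.sum_const, nsmul_eq_mul]
        apply mul_le_mul_of_nonneg_right _ (pow_nonneg hq0.le _)
        have : (Finset.univ.erase i).card ≤ n := by
          rw [Finset.card_erase_of_mem (Finset.mem_univ i), Finset.card_univ,
            Fintype.card_fin]
          omega
        exact_mod_cast this
      rw [h1']
      linarith
    calc ∑ i : Fin n, ∑ j : Fin n, (erMeasure n p (A i ∩ A j)).toReal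
        ≤ ∑ _i : Fin n, (q^(n-1) + (n:ℝ) * q^(2*(n-1)-1)) := Finset.sum_le_sum fun i _ => hrow i
      _ = a + (n:ℝ)^2 * q^(2*(n-1)-1) := by
          rw [Finset.sum_const, Finset.card_univ, Fintype.card_fin, nsmul_eq_mul, hadef]
          ring
  have hkey : a^2 ≤ P * (a + (n:ℝ)^2 * q^(2*(n-1)-1)) := by
    rw [hS] at hce
    exact hce.trans (mul_le_mul_of_nonneg_left hD hP0)
  -- rewrite n² q^(2n-3) = a²/q
  have hid : (n:ℝ)^2 * q^(2*(n-1)-1) = a^2 / q := by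
    have hexp : 2*(n-1)-1+1 = 2*(n-1) := by omega
    have h2 : (q^(2*(n-1)-1)) * q = q^(2*(n-1)) := by
      rw [← pow_succ, hexp]
    have h3 : a^2 = (n:ℝ)^2 * q^(2*(n-1)) := by
      rw [hadef, mul_pow, ← pow_mul]
      ring_nf
    rw [h3, ← h2]
    field_simp
  have hsumpos : 0 < a⁻¹ + q⁻¹ := by positivity
  have hPge : (a⁻¹ + q⁻¹)⁻¹ ≤ P := by
    have hval : a + (n:ℝ)^2 * q^(2*(n-1)-1) = a^2 * (a⁻¹ + q⁻¹) := by
      rw [hid]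
      field_simp
    rw [hval] at hkey
    have h1' : 1 ≤ P * (a⁻¹ + q⁻¹) := by
      have ha2 : 0 < a^2 := by positivity
      nlinarith
    rw [inv_eq_one_div, div_le_iff₀ hsumpos]
    linarith
  -- connected implies no isolated vertex
  have hsub : {ω : EdgeIdx n → Bool | (erGraph n ω).Connected} ⊆ Uᶜ := by
    intro ω hω hU
    simp only [hUdef, Finset.mem_univ, Set.mem_iUnion, Set.iUnion_true] at hU
    obtain ⟨i, hi⟩ := hU
    exact not_connected_of_isolated hn ω i hi hω
  have hcompl : (erMeasure n p Uᶜ).toReal = 1 - P := by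
    have hmeasU : MeasurableSet U := (Set.toFinite _).measurableSet
    rw [measure_compl hmeasU (measure_ne_top _ _), measure_univ]
    rw [ENNReal.toReal_sub_of_le prob_le_one ENNReal.one_ne_top, ENNReal.toReal_one, hPdef]
  have : (erMeasure n p {ω | (erGraph n ω).Connected}).toReal ≤ 1 - P := by
    rw [← hcompl]
    exact ENNReal.toReal_mono (measure_ne_top _ _) (measure_mono hsub)
  refine this.trans ?_
  have : (((n:ℝ) * (1-p)^(n-1))⁻¹ + ((1:ℝ)-p)⁻¹)⁻¹ = (a⁻¹ + q⁻¹)⁻¹ := by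
    rw [hadef, hqdef]
  rw [this]
  linarith


/-! ### Analytic estimates -/

lemma mlog_ineq {M N : ℝ} (hM : 1 ≤ M) (hMN : M ≤ N) :
    (M/N) * Real.log N ≤ 1 + Real.log M := by
  have hM0 : 0 < M := by linarith
  have hN0 : 0 < N := by linarith
  have hlogN : Real.log N = Real.log M + Real.log (N/M) := by
    rw [Real.log_div (ne_of_gt hN0) (ne_of_gt hM0)]
    ring
  have h1 : Real.log (N/M) ≤ N/M - 1 := Real.log_le_sub_one_of_pos (by positivity)
  have h2 : 0 ≤ Real.log M := Real.log_nonneg hM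
  have h3 : M/N ≤ 1 := by rw [div_le_one hN0]; exact hMN
  have h4 : (0:ℝ) < M/N := by positivity
  have h5 : (M/N) * (N/M - 1) = 1 - M/N := by field_simp
  have fa : (M/N) * Real.log (N/M) ≤ (M/N) * (N/M - 1) :=
    mul_le_mul_of_nonneg_left h1 h4.le
  have fb : (M/N) * Real.log M ≤ 1 * Real.log M :=
    mul_le_mul_of_nonneg_right h3 h2
  rw [hlogN, mul_add]
  rw [h5] at fa
  rw [one_mul] at fb
  linarith

lemma pow_self_le_exp_mul_factorial (m : ℕ) :
    (m:ℝ)^m ≤ Real.exp m * m.factorial := by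
  have h := Real.sum_le_exp_of_nonneg (x := (m:ℝ)) (by positivity) (m+1)
  have hterm : (m:ℝ)^m / m.factorial ≤ Real.exp m := by
    refine le_trans ?_ h
    exact Finset.single_le_sum (f := fun i => (m:ℝ)^i / i.factorial)
      (fun i _ => by positivity) (Finset.self_mem_range_succ m)
  rw [div_le_iff₀ (by positivity)] at hterm
  linarith

lemma choose_le_exp_bound (n m : ℕ) (hm : 1 ≤ m) (hmn : m ≤ n) :
    (n.choose m : ℝ) ≤ Real.exp (m * (1 + Real.log n - Real.log m)) := by
  have hm0 : (0:ℝ) < m := by exact_mod_cast hm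
  have hn0 : (0:ℝ) < n := by exact_mod_cast lt_of_lt_of_le (by omega : 0 < m) hmn
  have h1 : (n.choose m : ℝ) ≤ (n:ℝ)^m / m.factorial := Nat.choose_le_pow_div m n
  have h2 := pow_self_le_exp_mul_factorial m
  have hfac : (0:ℝ) < m.factorial := by positivity
  have h3 : (n:ℝ)^m / m.factorial ≤ (n:ℝ)^m * Real.exp m / (m:ℝ)^m := by
    rw [div_le_div_iff₀ hfac (by positivity)]
    calc (n:ℝ)^m * (m:ℝ)^m ≤ (n:ℝ)^m * (Real.exp m * m.factorial) :=
          mul_le_mul_of_nonneg_left h2 (by positivity)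
      _ = (n:ℝ)^m * Real.exp m * m.factorial := by ring
  refine (h1.trans h3).trans_eq ?_
  have hexp : Real.exp ((m:ℝ) * (1 + Real.log n - Real.log m))
      = (Real.exp 1 * n / m)^m := by
    rw [Real.exp_nat_mul, Real.exp_sub, Real.exp_add, Real.exp_log hn0, Real.exp_log hm0]
  rw [hexp, div_pow, mul_pow, Real.exp_one_pow]
  ring

lemma term_bound {n m : ℕ} (hm : 1 ≤ m) (h2m : 2*m ≤ n) {p c : ℝ}
    (hpc : p = (Real.log n + c)/n) (hp1 : p < 1) (hc : 0 ≤ c) :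
    (n.choose m : ℝ) * (1-p)^(m*(n-m)) ≤ Real.exp (m * (2 - c/2)) := by
  have hmn : m ≤ n := by omega
  have hn2 : 2 ≤ n := by omega
  have hM0 : (0:ℝ) < m := by exact_mod_cast hm
  have hN0 : (0:ℝ) < n := by exact_mod_cast (by omega : 0 < n)
  have hMN : (m:ℝ) ≤ (n:ℝ) := by exact_mod_cast hmn
  have hq0 : (0:ℝ) ≤ 1 - p := by linarith
  have hqe : 1 - p ≤ Real.exp (-p) := by
    have := Real.add_one_le_exp (-p); linarith
  have h1 : (1-p)^(m*(n-m)) ≤ Real.exp (-p)^(m*(n-m)) := pow_le_pow_left₀ hq0 hqe _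
  have h2 : Real.exp (-p)^(m*(n-m)) = Real.exp (((m*(n-m) : ℕ) : ℝ) * (-p)) :=
    (Real.exp_nat_mul _ _).symm
  have hcast : ((m*(n-m) : ℕ) : ℝ) = (m:ℝ) * ((n:ℝ) - m) := by
    push_cast [Nat.cast_sub hmn]
    ring
  have hchoose := choose_le_exp_bound n m hm hmn
  have hmain : (n.choose m : ℝ) * (1-p)^(m*(n-m))
      ≤ Real.exp ((m:ℝ) * (1 + Real.log n - Real.log m) + (m:ℝ) * ((n:ℝ) - m) * (-p)) := by
    rw [Real.exp_add]
    apply mul_le_mul hchoose _ (pow_nonneg hq0 _) (Real.exp_pos _).le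
    rw [← hcast]
    exact h1.trans_eq h2
  refine hmain.trans ?_
  rw [Real.exp_le_exp]
  -- the bracket inequality
  have hNM : ((n:ℝ) - m) * p = (1 - (m:ℝ)/(n:ℝ)) * (Real.log n + c) := by
    rw [hpc]
    field_simp
  have hhalf : (m:ℝ)/(n:ℝ) ≤ 1/2 := by
    rw [div_le_div_iff₀ hN0 two_pos]
    have : (2*m : ℕ) ≤ (n:ℕ) := h2m
    have h2m' : 2*(m:ℝ) ≤ (n:ℝ) := by exact_mod_cast this
    linarith
  have hml := mlog_ineq (M := (m:ℝ)) (N := (n:ℝ)) (by exact_mod_cast hm) hMN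
  have hxc : ((m:ℝ)/(n:ℝ))*c ≤ (1/2)*c := mul_le_mul_of_nonneg_right hhalf hc
  have hbr : 1 + Real.log n - Real.log m - ((n:ℝ) - m)*p ≤ 2 - c/2 := by
    rw [hNM]
    have hexpand : (1 - (m:ℝ)/(n:ℝ)) * (Real.log n + c)
        = Real.log n + c - ((m:ℝ)/(n:ℝ))*Real.log n - ((m:ℝ)/(n:ℝ))*c := by ring
    rw [hexpand]
    linarith
  calc (m:ℝ) * (1 + Real.log n - Real.log m) + (m:ℝ) * ((n:ℝ) - m) * (-p)
      = (m:ℝ) * (1 + Real.log n - Real.log m - ((n:ℝ) - m)*p) := by ring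
    _ ≤ (m:ℝ) * (2 - c/2) := mul_le_mul_of_nonneg_left hbr hM0.le

lemma binom_sum_le {n : ℕ} (hn : 2 ≤ n) {p c : ℝ}
    (hpc : p = (Real.log n + c)/n) (hp1 : p < 1) (hc : 6 ≤ c) :
    ∑ k ∈ Finset.Icc 1 (n-1), (n.choose k : ℝ) * (1-p)^(k*(n-k))
      ≤ 4 * Real.exp (2 - c/2) := by
  set r := Real.exp (2 - c/2) with hrdef
  have hc0 : (0:ℝ) ≤ c := by linarith
  have hr0 : 0 < r := Real.exp_pos _
  have he2 : (2:ℝ) ≤ Real.exp 1 := by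
    have := Real.add_one_le_exp 1; linarith
  have hrhalf : r ≤ 1/2 := by
    have h1 : r ≤ Real.exp (-1) := Real.exp_le_exp.mpr (by linarith)
    have h2 : Real.exp (-1) ≤ 1/2 := by
      rw [Real.exp_neg]
      rw [inv_le_iff_one_le_mul₀ (Real.exp_pos 1)]
      linarith
    linarith
  have hterm : ∀ k ∈ Finset.Icc 1 (n-1),
      (n.choose k : ℝ) * (1-p)^(k*(n-k)) ≤ r^k + r^(n-k) := by
    intro k hk
    obtain ⟨hk1, hk2⟩ := Finset.mem_Icc.mp hk
    have hkn : k ≤ n := by omega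
    rcases le_or_gt (2*k) n with h | h
    · have hb := term_bound hk1 h hpc hp1 hc0
      have : Real.exp ((k:ℝ) * (2 - c/2)) = r^k := by
        rw [hrdef, ← Real.exp_nat_mul]
      rw [this] at hb
      have : (0:ℝ) ≤ r^(n-k) := by positivity
      linarith
    · set m := n - k with hmdef
      have hm1 : 1 ≤ m := by omega
      have h2m : 2*m ≤ n := by omega
      have heq : n.choose k = n.choose m := (Nat.choose_symm hkn).symm
      have hexpeq : k*(n-k) = m*(n-m) := by
        rw [hmdef, show n - (n-k) = k by omega]
        ring
      have hb := term_bound hm1 h2m hpc hp1 hc0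
      have hrm : Real.exp ((m:ℝ) * (2 - c/2)) = r^m := by
        rw [hrdef, ← Real.exp_nat_mul]
      rw [hrm] at hb
      rw [heq, hexpeq]
      have : (0:ℝ) ≤ r^k := by positivity
      linarith
  refine (Finset.sum_le_sum hterm).trans ?_
  rw [Finset.sum_add_distrib]
  have hswap : ∑ k ∈ Finset.Icc 1 (n-1), r^(n-k) = ∑ k ∈ Finset.Icc 1 (n-1), r^k := by
    apply Finset.sum_nbij' (fun k => n - k) (fun k => n - k)
    · intro a ha
      rw [Finset.mem_Icc] at ha ⊢
      omega
    · intro a ha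
      rw [Finset.mem_Icc] at ha ⊢
      omega
    · intro a ha
      rw [Finset.mem_Icc] at ha
      omega
    · intro a ha
      rw [Finset.mem_Icc] at ha
      omega
    · intro a _
      rfl
  rw [hswap]
  have hgeom : ∑ k ∈ Finset.Icc 1 (n-1), r^k ≤ 2*r := by
    have hsub : Finset.Icc 1 (n-1) ⊆ Finset.Icc 1 n :=
      Finset.Icc_subset_Icc_right (by omega)
    have h1 : ∑ k ∈ Finset.Icc 1 (n-1), r^k ≤ ∑ k ∈ Finset.Icc 1 n, r^k :=
      Finset.sum_le_sum_of_subset_of_nonneg hsub (fun _ _ _ => by positivity)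
    have h2 : ∑ k ∈ Finset.Icc 1 n, r^k = r * ∑ k ∈ Finset.range n, r^k := by
      rw [Finset.mul_sum]
      apply Finset.sum_nbij' (fun k => k - 1) (fun k => k + 1)
      · intro a ha
        rw [Finset.mem_Icc] at ha
        rw [Finset.mem_range]
        omega
      · intro a ha
        rw [Finset.mem_range] at ha
        rw [Finset.mem_Icc]
        omega
      · intro a ha
        rw [Finset.mem_Icc] at ha
        omega
      · intro a _
        omega
      · intro a ha
        rw [Finset.mem_Icc] at ha
        have : a - 1 + 1 = a := by omega
        rw [← pow_succ', this]
    have hne : r ≠ 1 := by linarith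
    have h3 : ∑ k ∈ Finset.range n, r^k ≤ 1/(1-r) := by
      rw [geom_sum_eq hne n]
      have heq : (r^n - 1)/(r - 1) = (1 - r^n)/(1 - r) := by
        rw [← neg_div_neg_eq]
        ring_nf
      rw [heq]
      gcongr
      · linarith
      · have : (0:ℝ) ≤ r^n := by positivity
        linarith
    have h4 : 1/(1-r) ≤ 2 := by
      rw [div_le_iff₀ (by linarith)]
      linarith
    have h5 : r * ∑ k ∈ Finset.range n, r^k ≤ r * (1/(1-r)) :=
      mul_le_mul_of_nonneg_left h3 hr0.le
    have h6 : r * (1/(1-r)) ≤ r * 2 := mul_le_mul_of_nonneg_left h4 hr0.le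
    rw [h2] at h1
    linarith
  linarith

lemma a_lower {n : ℕ} {p c : ℝ} (hn : 1 ≤ n) (hpc : p = (Real.log n + c)/n)
    (hp0 : 0 < p) (hc : c ≤ 0) (hlog : 2*(Real.log n)^2 ≤ (n:ℝ)) :
    Real.exp (-1 - c) ≤ (n:ℝ) * (1-p)^(n-1) := by
  have hN1 : (1:ℝ) ≤ (n:ℝ) := by exact_mod_cast hn
  have hN0 : (0:ℝ) < n := by linarith
  have hlogN0 : 0 ≤ Real.log n := Real.log_nonneg hN1
  have hple : p ≤ Real.log n / n := by
    rw [hpc]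
    gcongr
    · linarith
  have hloge : Real.log n ≤ (n:ℝ) / Real.exp 1 := by
    have h1 := Real.log_le_sub_one_of_pos (show (0:ℝ) < (n:ℝ) / Real.exp 1 by positivity)
    rw [Real.log_div (ne_of_gt hN0) (ne_of_gt (Real.exp_pos 1)), Real.log_exp] at h1
    linarith
  have he2 : (2:ℝ) ≤ Real.exp 1 := by have := Real.add_one_le_exp 1; linarith
  have hloghalf : Real.log n / n ≤ 1/2 := by
    have hdiv : (n:ℝ)/Real.exp 1 ≤ (n:ℝ)/2 := by gcongr
    rw [div_le_div_iff₀ hN0 two_pos]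
    have h := hloge.trans hdiv
    rw [le_div_iff₀ two_pos] at h
    linarith
  have hphalf : p ≤ 1/2 := hple.trans hloghalf
  set q := 1 - p with hqdef
  have hq0 : 0 < q := by rw [hqdef]; linarith
  have hqhalf : 1/2 ≤ q := by rw [hqdef]; linarith
  have hpq0 : 0 ≤ p/q := by positivity
  have h2' : 1/q = p/q + 1 := by
    field_simp
    rw [hqdef]
    ring
  have hqe : Real.exp (-(p/q)) ≤ q := by
    have h1 := Real.add_one_le_exp (p/q)
    have h3 : 1/q ≤ Real.exp (p/q) := by rw [h2']; linarith
    rw [div_le_iff₀ hq0] at h3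
    rw [Real.exp_neg, inv_eq_one_div, div_le_iff₀ (Real.exp_pos _)]
    linarith [mul_comm q (Real.exp (p/q))]
  have hqpow : Real.exp (-(p/q))^(n-1) ≤ q^(n-1) :=
    pow_le_pow_left₀ (Real.exp_pos _).le hqe _
  have hcast : ((n-1 : ℕ) : ℝ) = (n:ℝ) - 1 := by
    push_cast [Nat.cast_sub hn]
    ring
  have hexp2 : Real.exp (-((n:ℝ) * (p/q))) ≤ Real.exp (((n-1:ℕ):ℝ) * (-(p/q))) := by
    rw [Real.exp_le_exp, hcast]
    nlinarith [hpq0]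
  have hqlow : Real.exp (-((n:ℝ) * (p/q))) ≤ q^(n-1) := by
    calc Real.exp (-((n:ℝ) * (p/q)))
        ≤ Real.exp (((n-1:ℕ):ℝ) * (-(p/q))) := hexp2
      _ = Real.exp (-(p/q))^(n-1) := Real.exp_nat_mul _ _
      _ ≤ q^(n-1) := hqpow
  have hmain : Real.exp (Real.log n - (n:ℝ)*(p/q)) ≤ (n:ℝ) * q^(n-1) := by
    rw [sub_eq_add_neg, Real.exp_add, Real.exp_log hN0]
    exact mul_le_mul_of_nonneg_left hqlow hN0.le
  have hNp : (n:ℝ) * p = Real.log n + c := by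
    rw [hpc]
    field_simp
  have hNp0 : 0 ≤ (n:ℝ)*p := by positivity
  have h1q2 : 1/q ≤ 2 := by
    rw [div_le_iff₀ hq0]
    linarith
  have hp2 : (n:ℝ)*p*p ≤ (Real.log n)^2 / n := by
    have hsq : p*p ≤ (Real.log n/n)^2 := by nlinarith [hp0.le, hple]
    calc (n:ℝ)*p*p = (n:ℝ)*(p*p) := by ring
      _ ≤ (n:ℝ)*((Real.log n/n)^2) := mul_le_mul_of_nonneg_left hsq hN0.le
      _ = (Real.log n)^2/n := by field_simp
  have hsecond : ((n:ℝ)*p)*(p/q) ≤ 1 := by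
    have ha : ((n:ℝ)*p)*(p/q) = ((n:ℝ)*p*p)*(1/q) := by ring
    have hb : ((n:ℝ)*p*p)*(1/q) ≤ ((n:ℝ)*p*p)*2 :=
      mul_le_mul_of_nonneg_left h1q2 (by positivity)
    have hcc : ((n:ℝ)*p*p)*2 ≤ ((Real.log n)^2/n)*2 := by linarith
    have hd : ((Real.log n)^2/n)*2 ≤ 1 := by
      rw [div_mul_eq_mul_div, div_le_one hN0]
      linarith
    rw [ha]
    linarith
  have hexpo : -1 - c ≤ Real.log n - (n:ℝ)*(p/q) := by
    have hq1 : (n:ℝ)*(p/q) = ((n:ℝ)*p)*(1/q) := by ring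
    have hsum : (n:ℝ)*(p/q) ≤ Real.log n + c + 1 := by
      rw [hq1, h2', mul_add, mul_one, hNp, ← hNp]
      linarith
    linarith
  calc Real.exp (-1 - c) ≤ Real.exp (Real.log n - (n:ℝ)*(p/q)) := Real.exp_le_exp.mpr hexpo
    _ ≤ (n:ℝ) * q^(n-1) := hmain

/-- Threshold for connectivity of the Erdős–Rényi graph `G(n, pₙ)` with
`pₙ = (log n + cₙ)/n` and `0 < pₙ < 1`:
(i) if `cₙ → ∞` then `Pₙ(G(n,pₙ) is connected) → 1`;
(ii) if `cₙ → −∞` then `Pₙ(G(n,pₙ) is connected) → 0`. -/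
theorem er_connectivity_threshold (p c : ℕ → ℝ)
    (hp : ∀ n : ℕ, 1 ≤ n → p n = (Real.log n + c n) / n ∧ 0 < p n ∧ p n < 1) :
    (Tendsto c atTop atTop →
      Tendsto (fun n : ℕ => (erMeasure n (p n) {ω | (erGraph n ω).Connected}).toReal)
        atTop (nhds 1)) ∧
    (Tendsto c atTop atBot →
      Tendsto (fun n : ℕ => (erMeasure n (p n) {ω | (erGraph n ω).Connected}).toReal)
        atTop (nhds 0)) := by
  constructor
  · -- Part (i): `c → ∞` implies connectivity probability tends to 1
    intro hct
    have hdisc : Tendsto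
        (fun n : ℕ => (erMeasure n (p n) {ω | ¬ (erGraph n ω).Connected}).toReal)
        atTop (nhds 0) := by
      have hbound : Tendsto (fun n : ℕ => 4 * Real.exp (2 - c n / 2)) atTop (nhds 0) := by
        have h2' : Tendsto (fun n : ℕ => c n / 2) atTop atTop :=
          hct.atTop_div_const two_pos
        have h3' : Tendsto (fun n : ℕ => -(c n / 2)) atTop atBot :=
          tendsto_neg_atTop_atBot.comp h2'
        have h1 : Tendsto (fun n : ℕ => 2 - c n / 2) atTop atBot := by
          have := tendsto_atBot_add_const_left atTop (2:ℝ) h3'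
          refine this.congr fun n => by ring
        have h4 := (Real.tendsto_exp_atBot.comp h1).const_mul (4:ℝ)
        simpa using h4
      apply squeeze_zero' (Filter.Eventually.of_forall fun n => ENNReal.toReal_nonneg)
        ?_ hbound
      have hev : ∀ᶠ n : ℕ in atTop, 2 ≤ n ∧ 6 ≤ c n :=
        (eventually_ge_atTop 2).and (hct.eventually_ge_atTop 6)
      filter_upwards [hev] with n hn
      obtain ⟨hn2, hc6⟩ := hn
      obtain ⟨hpc, hp0, hp1⟩ := hp n (by omega)
      exact (measure_disc_le n hp0.le hp1.le (by omega)).trans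
        (binom_sum_le hn2 hpc hp1 hc6)
    have heq : ∀ᶠ n : ℕ in atTop,
        1 - (erMeasure n (p n) {ω | ¬ (erGraph n ω).Connected}).toReal
          = (erMeasure n (p n) {ω | (erGraph n ω).Connected}).toReal := by
      filter_upwards [eventually_ge_atTop 1] with n hn
      obtain ⟨-, hp0, hp1⟩ := hp n hn
      exact (conn_toReal_eq n hp0.le hp1.le).symm
    have hlim : Tendsto
        (fun n : ℕ => 1 - (erMeasure n (p n) {ω | ¬ (erGraph n ω).Connected}).toReal)
        atTop (nhds 1) := by
      have := (tendsto_const_nhds (x := (1:ℝ)) (f := atTop)).sub hdisc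
      simpa using this
    exact Tendsto.congr' heq hlim
  · -- Part (ii): `c → -∞` implies connectivity probability tends to 0
    intro hct
    have hlogdiv : Tendsto (fun n : ℕ => Real.log n / n) atTop (nhds 0) := by
      have := (Real.tendsto_pow_log_div_mul_add_atTop 1 0 1 one_ne_zero).comp
        (tendsto_natCast_atTop_atTop (R := ℝ))
      simpa [Function.comp_def] using this
    have hlog2div : Tendsto (fun n : ℕ => (Real.log n)^2 / n) atTop (nhds 0) := by
      have := (Real.tendsto_pow_log_div_mul_add_atTop 1 0 2 one_ne_zero).comp
        (tendsto_natCast_atTop_atTop (R := ℝ))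
      simpa [Function.comp_def] using this
    have hc0 : ∀ᶠ n : ℕ in atTop, c n ≤ 0 := hct.eventually_le_atBot 0
    have hp0' : Tendsto (fun n : ℕ => p n) atTop (nhds 0) := by
      apply squeeze_zero' ?_ ?_ hlogdiv
      · filter_upwards [eventually_ge_atTop 1] with n hn
        exact (hp n hn).2.1.le
      · filter_upwards [eventually_ge_atTop 1, hc0] with n hn hcn
        obtain ⟨hpc, -, -⟩ := hp n hn
        have hN0 : (0:ℝ) < n := by exact_mod_cast hn
        rw [hpc]
        gcongr
        · linarith
    have hQinv : Tendsto (fun n : ℕ => (1 - p n)⁻¹) atTop (nhds 1) := by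
      have hQ : Tendsto (fun n : ℕ => 1 - p n) atTop (nhds 1) := by
        have := (tendsto_const_nhds (x := (1:ℝ)) (f := atTop)).sub hp0'
        simpa using this
      have := hQ.inv₀ one_ne_zero
      simpa using this
    have hexpc : Tendsto (fun n : ℕ => Real.exp (1 + c n)) atTop (nhds 0) :=
      Real.tendsto_exp_atBot.comp (tendsto_atBot_add_const_left atTop (1:ℝ) hct)
    have hevA : ∀ᶠ n : ℕ in atTop,
        ((n:ℝ) * (1 - p n)^(n-1))⁻¹ ≤ Real.exp (1 + c n)
          ∧ 0 ≤ ((n:ℝ) * (1 - p n)^(n-1))⁻¹ := by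
      have hev2 : ∀ᶠ n : ℕ in atTop, 2*(Real.log n)^2 ≤ (n:ℝ) := by
        have h := hlog2div.eventually_lt_const (show (0:ℝ) < 1/2 by norm_num)
        filter_upwards [h, eventually_ge_atTop 1] with n h1 h2
        have hN0 : (0:ℝ) < n := by exact_mod_cast h2
        rw [div_lt_iff₀ hN0] at h1
        linarith
      filter_upwards [hev2, eventually_ge_atTop 1, hc0] with n h2 h1 hcn
      obtain ⟨hpc, hpp0, hpp1⟩ := hp n h1
      have hal := a_lower h1 hpc hpp0 hcn h2
      have hapos : 0 < (n:ℝ) * (1 - p n)^(n-1) := lt_of_lt_of_le (Real.exp_pos _) hal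
      constructor
      · have := inv_anti₀ (Real.exp_pos (-1 - c n)) hal
        rw [← Real.exp_neg] at this
        refine this.trans_eq ?_
        congr 1
        ring
      · positivity
    have hAinv : Tendsto (fun n : ℕ => ((n:ℝ) * (1 - p n)^(n-1))⁻¹) atTop (nhds 0) :=
      squeeze_zero' (hevA.mono fun n h => h.2) (hevA.mono fun n h => h.1) hexpc
    have hinner : Tendsto
        (fun n : ℕ => (((n:ℝ) * (1 - p n)^(n-1))⁻¹ + (1 - p n)⁻¹)⁻¹) atTop (nhds 1) := by
      have hsum : Tendsto
          (fun n : ℕ => ((n:ℝ) * (1 - p n)^(n-1))⁻¹ + (1 - p n)⁻¹) atTop (nhds 1) := by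
        have := hAinv.add hQinv
        simpa using this
      have := hsum.inv₀ one_ne_zero
      simpa using this
    have hbound : Tendsto
        (fun n : ℕ => 1 - (((n:ℝ) * (1 - p n)^(n-1))⁻¹ + (1 - p n)⁻¹)⁻¹) atTop (nhds 0) := by
      have := (tendsto_const_nhds (x := (1:ℝ)) (f := atTop)).sub hinner
      simpa using this
    apply squeeze_zero' (Filter.Eventually.of_forall fun n => ENNReal.toReal_nonneg)
      ?_ hbound
    filter_upwards [eventually_ge_atTop 2] with n hn
    obtain ⟨hpc, hpp0, hpp1⟩ := hp n (by omega)
    exact measure_conn_le n hpp0.le hpp1 hn
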